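/- Let n ≥ 3, d ≥ 2, let ξ = e^{2πi/d} ∈ ℂ, and let a_1,…,a_n be integers with 0 ≤ a_i ≤ d−1. Let F = Π_{i=0}^{d−1} (ξ^{i a_1} x_1 + ξ^{i a_2} x_2 + ⋯ + ξ^{i a_n} x_n) ∈ ℂ[x_1,…,x_n]. Then F is a non-zero homogeneous polynomial of degree d, F is divisible by the linear form x_1 + ⋯ + x_n, and every monomial x_1^{α_1}⋯x_n^{α_n} ∈ supp(F) satisfies a_1α_1 + ⋯ + a_nα_n ≡ 0 (mod d); that is, F lies in the ideal generated by all degree-d forms fixed by the action x_i ↦ ξ^{a_i}x_i of ℤ/dℤ. -/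

import Mathlib

open MvPolynomial Finset

lemma scale_monomial {n : ℕ} (c : Fin n → ℂ) (u : Fin n →₀ ℕ) (r : ℂ) :
    aeval (fun t => C (c t) * X t : Fin n → MvPolynomial (Fin n) ℂ) (monomial u r)
      = monomial u (r * ∏ t, c t ^ u t) := by
  rw [aeval_monomial, monomial_eq, Finsupp.prod, Finsupp.prod]
  simp only [mul_pow, ← C_pow]
  rw [Finset.prod_mul_distrib, ← map_prod]
  have : (∏ t ∈ u.support, c t ^ u t) = ∏ t, c t ^ u t := by
    apply Finset.prod_subset (Finset.subset_univ _)
    intro t _ ht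
    simp [Finsupp.notMem_support_iff.mp ht]
  rw [this]
  rw [algebraMap_eq, map_mul]
  ring

lemma coeff_scale {n : ℕ} (c : Fin n → ℂ) (F : MvPolynomial (Fin n) ℂ) (m : Fin n →₀ ℕ) :
    coeff m (aeval (fun t => C (c t) * X t : Fin n → MvPolynomial (Fin n) ℂ) F)
      = (∏ t, c t ^ m t) * coeff m F := by
  conv_lhs => rw [F.as_sum]
  rw [map_sum]
  simp only [scale_monomial]
  rw [MvPolynomial.coeff_sum]
  simp only [coeff_monomial]
  rw [Finset.sum_ite_eq' F.support m (fun u => coeff u F * ∏ t, c t ^ u t)]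
  by_cases h : m ∈ F.support
  · simp [h, mul_comm]
  · simp [h, MvPolynomial.notMem_support_iff.mp h]


/-- For `n ≥ 3`, `d ≥ 2`, `ξ = e^{2πi/d}` and `0 ≤ a_1, …, a_n ≤ d-1`, the polynomial
`F = ∏_{i=0}^{d-1} (ξ^{i a_1} x_1 + ⋯ + ξ^{i a_n} x_n)` is a non-zero form of degree
`d`, divisible by `x_1 + ⋯ + x_n`, and every monomial of `F` has exponent vector `α`
with `a_1α_1 + ⋯ + a_nα_n ≡ 0 (mod d)`, i.e. `F` lies in the ideal generated by the
degree-`d` forms fixed by `x_i ↦ ξ^{a_i} x_i`. -/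
theorem product_form_in_fixed_ideal {n : ℕ} (hn : 3 ≤ n) (d : ℕ) (hd : 2 ≤ d)
    (ξ : ℂ) (hξ : ξ = Complex.exp (2 * Real.pi * Complex.I / d))
    (a : Fin n → ℕ) (ha : ∀ i, a i ≤ d - 1)
    (F : MvPolynomial (Fin n) ℂ)
    (hF : F = ∏ i ∈ Finset.range d, ∑ t, MvPolynomial.C (ξ ^ (i * a t)) * MvPolynomial.X t) :
    F ≠ 0 ∧ F.IsHomogeneous d ∧ (∑ t, MvPolynomial.X t : MvPolynomial (Fin n) ℂ) ∣ F ∧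
      ∀ m ∈ F.support, d ∣ ∑ i, a i * m i := by
  have hd0 : d ≠ 0 := by omega
  have hprim : IsPrimitiveRoot ξ d := hξ ▸ Complex.isPrimitiveRoot_exp d hd0
  have hξ0 : ξ ≠ 0 := hprim.ne_zero hd0
  have hξd : ξ ^ d = 1 := hprim.pow_eq_one
  set L : ℕ → MvPolynomial (Fin n) ℂ := fun i => ∑ t, C (ξ ^ (i * a t)) * X t with hLdef
  have hn0 : 0 < n := by omega
  have t0 : Fin n := ⟨0, hn0⟩
  -- each factor is nonzero
  have hcoeff : ∀ i (t0 : Fin n), coeff (Finsupp.single t0 1) (L i) = ξ ^ (i * a t0) := by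
    intro i t0
    rw [hLdef]
    rw [MvPolynomial.coeff_sum]
    simp only [coeff_C_mul, MvPolynomial.coeff_X', Finsupp.single_left_inj (one_ne_zero)]
    simp [Finset.sum_ite_eq']
  have hL0 : ∀ i, L i ≠ 0 := by
    intro i h
    have := hcoeff i ⟨0, hn0⟩
    rw [h] at this
    simp only [coeff_zero] at this
    exact (pow_ne_zero _ hξ0) this.symm
  have hLzero : L 0 = ∑ t, X t := by
    simp [hLdef]
  constructor
  · rw [hF]
    exact Finset.prod_ne_zero_iff.mpr fun i _ => hL0 i
  refine ⟨?_, ?_, ?_⟩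
  · rw [hF]
    have hh : ((Finset.range d).prod L).IsHomogeneous (∑ _i ∈ Finset.range d, 1) := by
      apply IsHomogeneous.prod
      intro i _
      apply IsHomogeneous.sum
      intro t _
      simpa using (isHomogeneous_X ℂ t).C_mul (ξ ^ (i * a t))
    simpa using hh
  · rw [hF, ← hLzero]
    exact Finset.dvd_prod_of_mem L (Finset.mem_range.mpr (by omega))
  · -- invariance under scaling
    intro m hm
    set φ := aeval (R := ℂ) (fun t => C (ξ ^ a t) * X t : Fin n → MvPolynomial (Fin n) ℂ) with hφ
    have hstep : ∀ i, φ (L i) = L (i + 1) := by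
      intro i
      rw [hLdef]
      simp only [hφ, hLdef, map_sum, map_mul, aeval_C, aeval_X]
      refine Finset.sum_congr rfl fun t _ => ?_
      rw [algebraMap_eq, ← mul_assoc, ← map_mul, ← pow_add]
      congr 2
      ring
    have hLd : L d = L 0 := by
      simp only [hLdef, zero_mul, pow_zero, map_one, one_mul]
      refine Finset.sum_congr rfl fun t _ => ?_
      rw [mul_comm, pow_mul, hξd, one_pow, map_one, mul_one]
    have hφF : φ F = F := by
      rw [hF, map_prod]
      change ∏ i ∈ Finset.range d, φ (L i) = ∏ i ∈ Finset.range d, L i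
      simp only [hstep]
      have h1 : (∏ i ∈ Finset.range d, L (i + 1)) * L 0 = (∏ i ∈ Finset.range d, L i) * L 0 := by
        rw [← Finset.prod_range_succ', Finset.prod_range_succ, hLd]
      exact mul_right_cancel₀ (hL0 0) h1
    have hc := coeff_scale (fun t => ξ ^ a t) F m
    rw [hφF] at hc
    have hprod : (∏ t, (ξ ^ a t) ^ m t) = ξ ^ ∑ t, a t * m t := by
      simp only [← pow_mul]
      rw [← Finset.prod_pow_eq_pow_sum]
    have hcm : coeff m F ≠ 0 := MvPolynomial.mem_support_iff.mp hm
    rw [hprod] at hc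
    have : ξ ^ ∑ t, a t * m t = 1 := by
      by_contra h
      have := mul_right_cancel₀ hcm (by rw [← hc]; ring_nf : ξ ^ (∑ t, a t * m t) * coeff m F = 1 * coeff m F)
      exact h this
    exact hprim.dvd_of_pow_eq_one _ this
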